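/- For every integer d ≥ 2, every even integer k ≥ 4, and all constants c_1, c_2, c_3 > 0, there exists a constant C > 0 such that for every power q of an odd prime, every (c_1,c_2,c_3)-regular set V ⊆ F_q^d, and every E ⊆ V, one has Λ_k(E) ≤ C ( q^{(d−1)(k−2)/2} Λ_2(E) + q^{−1} Σ_{j=0}^{(k−4)/2} q^{(d−1)j} |E|^{k−1−2j} ). -/

import Mathlib

set_option linter.unusedSectionVars false
set_option maxHeartbeats 1000000


open Finset

/-- `‖x‖ = x₁² + ⋯ + x_d²` for `x ∈ 𝔽_q^d`. -/
def normF {F : Type*} [Field F] {d : ℕ} (x : Fin d → F) : F := ∑ i, x i ^ 2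

/-- The `k`-resultant set `Δ_k(E) = {‖x¹ - x² - ⋯ - x^k‖ : xⁱ ∈ E}` (for `k ≥ 2`):
`y` plays the role of `x¹` and `x 0, …, x (k-2)` play the roles of `x², …, x^k`. -/
def Delta {F : Type*} [Field F] {d : ℕ} (k : ℕ) (E : Set (Fin d → F)) : Set F :=
  {t | ∃ (y : Fin d → F) (x : Fin (k - 1) → Fin d → F),
    y ∈ E ∧ (∀ i, x i ∈ E) ∧ normF (y - ∑ i, x i) = t}

/-- The `2m`-energy `Λ_{2m}(E)`: the number of `2m`-tuples of points of `E`
whose first `m` entries and last `m` entries have equal sums. -/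
noncomputable def energy {F : Type*} [Field F] {d : ℕ} (m : ℕ) (E : Set (Fin d → F)) : ℕ :=
  Nat.card {p : (Fin m → Fin d → F) × (Fin m → Fin d → F) //
    (∀ i, p.1 i ∈ E) ∧ (∀ i, p.2 i ∈ E) ∧ (∑ i, p.1 i) = ∑ i, p.2 i}

/-- The (normalized) Fourier transform of the indicator function of `E ⊆ 𝔽_q^d`,
with respect to the additive character `χ`. -/
noncomputable def ftF {F : Type*} [Field F] [Fintype F] {d : ℕ} (χ : AddChar F ℂ)
    (E : Set (Fin d → F)) (m : Fin d → F) : ℂ :=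
  ((Fintype.card F : ℂ) ^ d)⁻¹ *
    ∑ x : Fin d → F, Set.indicator E (fun y => χ (-(∑ i, m i * y i))) x

/-- `V ⊆ 𝔽_q^d` is `(c₁,c₂,c₃)`-regular (with respect to the character `χ`). -/
def IsRegularVariety {F : Type*} [Field F] [Fintype F] {d : ℕ} (c1 c2 c3 : ℝ) (χ : AddChar F ℂ)
    (V : Set (Fin d → F)) : Prop :=
  c1 * (Fintype.card F : ℝ) ^ (d - 1) ≤ (Nat.card V : ℝ) ∧
  (Nat.card V : ℝ) ≤ c2 * (Fintype.card F : ℝ) ^ (d - 1) ∧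
  ∀ m : Fin d → F, m ≠ 0 →
    ‖ftF χ V m‖ ≤ c3 * (Fintype.card F : ℝ) ^ (-(((d : ℝ) + 1) / 2))

/-- `V ⊆ 𝔽_q²` is a `(c₁,c₂,c₃)`-nondegenerate regular curve defined by a nonzero
polynomial of total degree at most `n` (with respect to the character `χ`). -/
def IsNondegCurve {F : Type*} [Field F] [Fintype F] (c1 c2 c3 : ℝ) (χ : AddChar F ℂ)
    (n : ℕ) (V : Set (Fin 2 → F)) : Prop :=
  (∃ Q : MvPolynomial (Fin 2) F, Q ≠ 0 ∧ Q.totalDegree ≤ n ∧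
      (¬∃ A B : MvPolynomial (Fin 2) F, A.totalDegree = 1 ∧ Q = A * B) ∧
      V = {x | MvPolynomial.eval x Q = 0}) ∧
  c1 * (Fintype.card F : ℝ) ≤ (Nat.card V : ℝ) ∧
  (Nat.card V : ℝ) ≤ c2 * (Fintype.card F : ℝ) ∧
  ∀ m : Fin 2 → F, m ≠ 0 →
    ‖ftF χ V m‖ ≤ c3 * (Fintype.card F : ℝ) ^ (-(3 / 2) : ℝ)



section Aux

variable {F : Type} [Field F] [Fintype F] {d : ℕ}

/-- dot product -/
def dotp (ξ x : Fin d → F) : F := ∑ i, ξ i * x i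

open Classical in
/-- complex indicator -/
noncomputable def aind (E : Set (Fin d → F)) (x : Fin d → F) : ℂ := if x ∈ E then 1 else 0

/-- unnormalized Fourier sum -/
noncomputable def aS (χ : AddChar F ℂ) (E : Set (Fin d → F)) (ξ : Fin d → F) : ℂ :=
  ∑ x, aind E x * χ (dotp ξ x)

lemma dotp_add (ξ u v : Fin d → F) : dotp ξ (u + v) = dotp ξ u + dotp ξ v := by
  simp [dotp, mul_add, Finset.sum_add_distrib]

lemma dotp_neg (ξ u : Fin d → F) : dotp ξ (-u) = -dotp ξ u := by
  simp [dotp, ← Finset.sum_neg_distrib]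

lemma dotp_sub (ξ u v : Fin d → F) : dotp ξ (u - v) = dotp ξ u - dotp ξ v := by
  simp [sub_eq_add_neg, dotp_add, dotp_neg]

lemma dotp_neg_left (ξ u : Fin d → F) : dotp (-ξ) u = -dotp ξ u := by
  simp [dotp, ← Finset.sum_neg_distrib]

lemma dotp_zero_right (ξ : Fin d → F) : dotp ξ 0 = 0 := by simp [dotp]

lemma dotp_zero_left (x : Fin d → F) : dotp 0 x = 0 := by simp [dotp]

lemma dotp_sum {ι : Type*} (s : Finset ι) (ξ : Fin d → F) (a : ι → Fin d → F) :
    dotp ξ (∑ j ∈ s, a j) = ∑ j ∈ s, dotp ξ (a j) := by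
  classical
  induction s using Finset.induction with
  | empty => simp [dotp_zero_right]
  | insert a s h ih => rw [Finset.sum_insert h, Finset.sum_insert h, dotp_add, ih]

lemma achar_sum {ι : Type*} (χ : AddChar F ℂ) (s : Finset ι) (f : ι → F) :
    χ (∑ i ∈ s, f i) = ∏ i ∈ s, χ (f i) := by
  classical
  induction s using Finset.induction with
  | empty => simp
  | insert a s h ih => rw [Finset.sum_insert h, Finset.prod_insert h, AddChar.map_add_eq_mul, ih]

open Classical in
lemma sum_char_mul (χ : AddChar F ℂ) (hχ : χ ≠ 1) (z : F) :
    ∑ t : F, χ (t * z) = if z = 0 then (Fintype.card F : ℂ) else 0 := by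
  split_ifs with h
  · simp [h, Finset.card_univ]
  · have h1 : χ.mulShift z ≠ 1 := fun h1 =>
      hχ ((AddChar.mulShift_unit_eq_one_iff χ (isUnit_iff_ne_zero.2 h)).1 h1)
    have := (AddChar.sum_eq_zero_iff_ne_zero (ψ := χ.mulShift z)).2 h1
    rw [← this]
    exact Finset.sum_congr rfl fun t _ => by rw [AddChar.mulShift_apply, mul_comm]

open Classical in
lemma sum_char_dotp (χ : AddChar F ℂ) (hχ : χ ≠ 1) (u : Fin d → F) :
    ∑ ξ : Fin d → F, χ (dotp ξ u) = if u = 0 then ((Fintype.card F : ℂ)) ^ d else 0 := by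
  have key : ∑ ξ : Fin d → F, χ (dotp ξ u) = ∏ i : Fin d, ∑ t : F, χ (t * u i) := by
    rw [Fintype.prod_sum (fun i t => χ (t * u i))]
    exact Finset.sum_congr rfl fun ξ _ => by rw [dotp, achar_sum]
  rw [key]
  split_ifs with h
  · subst h
    simp [Finset.prod_const, Finset.card_univ]
  · obtain ⟨i, hi⟩ : ∃ i, u i ≠ 0 := by
      by_contra hc; push_neg at hc; exact h (funext hc)
    refine Finset.prod_eq_zero (Finset.mem_univ i) ?_
    rw [sum_char_mul χ hχ, if_neg hi]

lemma aS_pow (χ : AddChar F ℂ) (E : Set (Fin d → F)) (ξ : Fin d → F) (n : ℕ) :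
    (aS χ E ξ) ^ n = ∑ a : Fin n → Fin d → F,
      (∏ i, aind E (a i)) * χ (dotp ξ (∑ i, a i)) := by
  rw [aS, Fintype.sum_pow]
  refine Finset.sum_congr rfl fun a _ => ?_
  rw [Finset.prod_mul_distrib, dotp_sum, achar_sum]

open Classical in
lemma prod_aind (E : Set (Fin d → F)) {n : ℕ} (a : Fin n → Fin d → F) :
    (∏ i, aind E (a i)) = if (∀ i, a i ∈ E) then 1 else 0 := by
  split_ifs with h
  · exact Finset.prod_eq_one fun i _ => by rw [aind, if_pos (h i)]
  · push_neg at h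
    obtain ⟨i, hi⟩ := h
    exact Finset.prod_eq_zero (Finset.mem_univ i) (by rw [aind, if_neg hi])

lemma sum_comm_swap {α β : Type*} [Fintype α] [Fintype β] (f : α → β → ℂ) :
    ∑ i : α, ∑ j : β, f i j = ∑ j : β, ∑ i : α, f i j := Finset.sum_comm

/-- master identity -/
lemma master (χ : AddChar F ℂ) (hχ : χ ≠ 1) (h : (Fin d → F) → ℂ) (E : Set (Fin d → F))
    (m1 m2 : ℕ) :
    ∑ ξ : Fin d → F, (∑ x, h x * χ (-(dotp ξ x))) * (aS χ E ξ) ^ m1 * (aS χ E (-ξ)) ^ m2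
      = ((Fintype.card F : ℂ)) ^ d * ∑ a : Fin m1 → Fin d → F, ∑ b : Fin m2 → Fin d → F,
          (∏ i, aind E (a i)) * (∏ i, aind E (b i)) * h (∑ i, a i - ∑ i, b i) := by
  have step1 : ∀ ξ : Fin d → F,
      (∑ x, h x * χ (-(dotp ξ x))) * (aS χ E ξ) ^ m1 * (aS χ E (-ξ)) ^ m2
      = ∑ x : Fin d → F, ∑ a : Fin m1 → Fin d → F, ∑ b : Fin m2 → Fin d → F,
          (h x * ((∏ i, aind E (a i)) * (∏ i, aind E (b i))))
            * χ (dotp ξ (∑ i, a i - ∑ i, b i - x)) := by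
    intro ξ
    rw [aS_pow, aS_pow]
    rw [Finset.sum_mul, Finset.sum_mul]
    refine Finset.sum_congr rfl fun x _ => ?_
    rw [mul_assoc, Finset.sum_mul_sum, Finset.mul_sum]
    refine Finset.sum_congr rfl fun a _ => ?_
    rw [Finset.mul_sum]
    refine Finset.sum_congr rfl fun b _ => ?_
    have harg : dotp ξ (∑ i, a i - ∑ i, b i - x)
        = dotp ξ (∑ i, a i) + (dotp (-ξ) (∑ i, b i) + -dotp ξ x) := by
      rw [dotp_sub, dotp_sub, dotp_neg_left]; ring
    rw [harg, AddChar.map_add_eq_mul, AddChar.map_add_eq_mul]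
    ring
  calc ∑ ξ : Fin d → F, (∑ x, h x * χ (-(dotp ξ x))) * (aS χ E ξ) ^ m1 * (aS χ E (-ξ)) ^ m2
      = ∑ ξ : Fin d → F, ∑ x : Fin d → F, ∑ a : Fin m1 → Fin d → F, ∑ b : Fin m2 → Fin d → F,
          (h x * ((∏ i, aind E (a i)) * (∏ i, aind E (b i))))
            * χ (dotp ξ (∑ i, a i - ∑ i, b i - x)) := Finset.sum_congr rfl fun ξ _ => step1 ξ
    _ = ∑ x : Fin d → F, ∑ a : Fin m1 → Fin d → F, ∑ b : Fin m2 → Fin d → F,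
          (h x * ((∏ i, aind E (a i)) * (∏ i, aind E (b i))))
            * ∑ ξ : Fin d → F, χ (dotp ξ (∑ i, a i - ∑ i, b i - x)) := by
        rw [sum_comm_swap]
        refine Finset.sum_congr rfl fun x _ => ?_
        rw [sum_comm_swap]
        refine Finset.sum_congr rfl fun a _ => ?_
        rw [sum_comm_swap]
        refine Finset.sum_congr rfl fun b _ => ?_
        rw [Finset.mul_sum]
    _ = ((Fintype.card F : ℂ)) ^ d * ∑ a : Fin m1 → Fin d → F, ∑ b : Fin m2 → Fin d → F,
          (∏ i, aind E (a i)) * (∏ i, aind E (b i)) * h (∑ i, a i - ∑ i, b i) := by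
        classical
        rw [Finset.mul_sum]
        rw [sum_comm_swap]
        refine Finset.sum_congr rfl fun a _ => ?_
        rw [Finset.mul_sum, sum_comm_swap]
        refine Finset.sum_congr rfl fun b _ => ?_
        have : ∀ x : Fin d → F,
            (h x * ((∏ i, aind E (a i)) * (∏ i, aind E (b i))))
              * ∑ ξ : Fin d → F, χ (dotp ξ (∑ i, a i - ∑ i, b i - x))
            = if (∑ i, a i - ∑ i, b i) = x then
                (h x * ((∏ i, aind E (a i)) * (∏ i, aind E (b i)))) * (Fintype.card F : ℂ) ^ d
              else 0 := by
          intro x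
          rw [sum_char_dotp χ hχ]
          by_cases hx : (∑ i, a i - ∑ i, b i) = x
          · rw [if_pos hx, if_pos (by rw [hx]; simp)]
          · rw [if_neg hx, if_neg (fun hc => hx (by rwa [sub_eq_zero] at hc)), mul_zero]
        rw [Finset.sum_congr rfl fun x _ => this x, Finset.sum_ite_eq]
        rw [if_pos (Finset.mem_univ _)]
        ring

end Aux
section Aux2

variable {F : Type} [Field F] [Fintype F] {d : ℕ}

open Classical in
lemma count1 (E : Set (Fin d → F)) (n : ℕ) :
    ∑ a : Fin n → Fin d → F, ∑ b : Fin n → Fin d → F,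
      (∏ i, aind E (a i)) * (∏ i, aind E (b i))
        * (if (∑ i, a i) - (∑ i, b i) = 0 then (1:ℂ) else 0)
      = (energy n E : ℂ) := by
  have hpt : ∀ p : (Fin n → Fin d → F) × (Fin n → Fin d → F),
      (∏ i, aind E (p.1 i)) * (∏ i, aind E (p.2 i))
        * (if (∑ i, p.1 i) - (∑ i, p.2 i) = 0 then (1:ℂ) else 0)
      = if (∀ i, p.1 i ∈ E) ∧ (∀ i, p.2 i ∈ E) ∧ (∑ i, p.1 i) = ∑ i, p.2 i then (1:ℂ) else 0 := by
    intro p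
    rw [prod_aind, prod_aind]
    by_cases h1 : ∀ i, p.1 i ∈ E <;> by_cases h2 : ∀ i, p.2 i ∈ E <;>
      by_cases h3 : (∑ i, p.1 i) = ∑ i, p.2 i <;> simp [h1, h2, h3, sub_eq_zero]
  calc ∑ a : Fin n → Fin d → F, ∑ b : Fin n → Fin d → F,
      (∏ i, aind E (a i)) * (∏ i, aind E (b i))
        * (if (∑ i, a i) - (∑ i, b i) = 0 then (1:ℂ) else 0)
      = ∑ a : Fin n → Fin d → F, ∑ b : Fin n → Fin d → F,
        (if (∀ i, a i ∈ E) ∧ (∀ i, b i ∈ E) ∧ (∑ i, a i) = ∑ i, b i then (1:ℂ) else 0) :=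
        Finset.sum_congr rfl fun a _ => Finset.sum_congr rfl fun b _ => hpt (a, b)
    _ = ∑ p : (Fin n → Fin d → F) × (Fin n → Fin d → F),
        (if (∀ i, p.1 i ∈ E) ∧ (∀ i, p.2 i ∈ E) ∧ (∑ i, p.1 i) = ∑ i, p.2 i then (1:ℂ) else 0) :=
        (Fintype.sum_prod_type (f := fun p : (Fin n → Fin d → F) × (Fin n → Fin d → F) =>
          if (∀ i, p.1 i ∈ E) ∧ (∀ i, p.2 i ∈ E) ∧ (∑ i, p.1 i) = ∑ i, p.2 i then (1:ℂ)
          else 0)).symm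
    _ = (energy n E : ℂ) := by
        rw [Finset.sum_boole, energy, Nat.card_eq_fintype_card, Fintype.card_subtype]

open Classical in
lemma count2 (V E : Set (Fin d → F)) (m1 m2 : ℕ) :
    ∑ a : Fin m1 → Fin d → F, ∑ b : Fin m2 → Fin d → F,
      (∏ i, aind E (a i)) * (∏ i, aind E (b i)) * aind V (∑ i, a i - ∑ i, b i)
      = (Nat.card {p : (Fin m1 → Fin d → F) × (Fin m2 → Fin d → F) //
          (∀ i, p.1 i ∈ E) ∧ (∀ i, p.2 i ∈ E) ∧ (∑ i, p.1 i) - (∑ i, p.2 i) ∈ V} : ℂ) := by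
  have hpt : ∀ p : (Fin m1 → Fin d → F) × (Fin m2 → Fin d → F),
      (∏ i, aind E (p.1 i)) * (∏ i, aind E (p.2 i)) * aind V (∑ i, p.1 i - ∑ i, p.2 i)
      = if (∀ i, p.1 i ∈ E) ∧ (∀ i, p.2 i ∈ E) ∧ (∑ i, p.1 i) - (∑ i, p.2 i) ∈ V
          then (1:ℂ) else 0 := by
    intro p
    rw [prod_aind, prod_aind, aind]
    by_cases h1 : ∀ i, p.1 i ∈ E <;> by_cases h2 : ∀ i, p.2 i ∈ E <;>
      by_cases h3 : (∑ i, p.1 i) - (∑ i, p.2 i) ∈ V <;> simp [h1, h2, h3]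
  calc ∑ a : Fin m1 → Fin d → F, ∑ b : Fin m2 → Fin d → F,
      (∏ i, aind E (a i)) * (∏ i, aind E (b i)) * aind V (∑ i, a i - ∑ i, b i)
      = ∑ a : Fin m1 → Fin d → F, ∑ b : Fin m2 → Fin d → F,
        (if (∀ i, a i ∈ E) ∧ (∀ i, b i ∈ E) ∧ (∑ i, a i) - (∑ i, b i) ∈ V then (1:ℂ) else 0) :=
        Finset.sum_congr rfl fun a _ => Finset.sum_congr rfl fun b _ => hpt (a, b)
    _ = ∑ p : (Fin m1 → Fin d → F) × (Fin m2 → Fin d → F),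
        (if (∀ i, p.1 i ∈ E) ∧ (∀ i, p.2 i ∈ E) ∧ (∑ i, p.1 i) - (∑ i, p.2 i) ∈ V
          then (1:ℂ) else 0) :=
        (Fintype.sum_prod_type (f := fun p : (Fin m1 → Fin d → F) × (Fin m2 → Fin d → F) =>
          if (∀ i, p.1 i ∈ E) ∧ (∀ i, p.2 i ∈ E) ∧ (∑ i, p.1 i) - (∑ i, p.2 i) ∈ V then (1:ℂ)
          else 0)).symm
    _ = _ := by rw [Finset.sum_boole, Nat.card_eq_fintype_card, Fintype.card_subtype]

lemma count_energy (χ : AddChar F ℂ) (hχ : χ ≠ 1) (E : Set (Fin d → F)) (n : ℕ) :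
    ∑ ξ : Fin d → F, (aS χ E ξ) ^ n * (aS χ E (-ξ)) ^ n
      = (Fintype.card F : ℂ) ^ d * (energy n E : ℂ) := by
  classical
  have hm := master χ hχ (fun u => if u = 0 then (1:ℂ) else 0) E n n
  have hfirst : ∀ ξ : Fin d → F,
      (∑ x, (if x = 0 then (1:ℂ) else 0) * χ (-(dotp ξ x))) = 1 := by
    intro ξ
    simp only [ite_mul, one_mul, zero_mul]
    rw [Finset.sum_ite_eq' Finset.univ (0 : Fin d → F) (fun x => χ (-(dotp ξ x)))]
    simp [dotp_zero_right]
  simp only [hfirst, one_mul] at hm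
  rw [hm, count1]

lemma aind_sum (E : Set (Fin d → F)) : ∑ x, aind E x = (Nat.card E : ℂ) := by
  classical
  rw [show ∑ x, aind E x = ∑ x, if x ∈ E then (1:ℂ) else 0 from
    Finset.sum_congr rfl fun x _ => by rw [aind], Finset.sum_boole]
  rw [Nat.card_eq_fintype_card, Fintype.card_subtype]

lemma aS_zero (χ : AddChar F ℂ) (E : Set (Fin d → F)) :
    aS χ E 0 = (Nat.card E : ℂ) := by
  rw [aS, ← aind_sum E]
  exact Finset.sum_congr rfl fun x _ => by rw [dotp_zero_left, AddChar.map_zero_eq_one, mul_one]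

lemma ftF_apply' (χ : AddChar F ℂ) (V : Set (Fin d → F)) (ξ : Fin d → F) :
    ftF χ V ξ = ((Fintype.card F : ℂ) ^ d)⁻¹ * ∑ x, aind V x * χ (-(dotp ξ x)) := by
  rw [ftF]
  congr 1
  refine Finset.sum_congr rfl fun x _ => ?_
  by_cases h : x ∈ V
  · rw [Set.indicator_of_mem h, aind, if_pos h, one_mul, dotp]
  · rw [Set.indicator_of_notMem h, aind, if_neg h, zero_mul]

lemma ftF_zero (χ : AddChar F ℂ) (V : Set (Fin d → F)) :
    ftF χ V 0 = (Nat.card V : ℂ) / (Fintype.card F : ℂ) ^ d := by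
  rw [ftF_apply', div_eq_inv_mul]
  congr 1
  rw [← aind_sum V]
  exact Finset.sum_congr rfl fun x _ => by
    rw [dotp_zero_left, neg_zero, AddChar.map_zero_eq_one, mul_one]

lemma ftF_master (χ : AddChar F ℂ) (hχ : χ ≠ 1) (V E : Set (Fin d → F)) (m1 m2 : ℕ) :
    ∑ ξ : Fin d → F, ftF χ V ξ * (aS χ E ξ) ^ m1 * (aS χ E (-ξ)) ^ m2
      = (Nat.card {p : (Fin m1 → Fin d → F) × (Fin m2 → Fin d → F) //
          (∀ i, p.1 i ∈ E) ∧ (∀ i, p.2 i ∈ E) ∧ (∑ i, p.1 i) - (∑ i, p.2 i) ∈ V} : ℂ) := by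
  have hq : ((Fintype.card F : ℂ)) ^ d ≠ 0 :=
    pow_ne_zero _ (Nat.cast_ne_zero.2 Fintype.card_ne_zero)
  have hstep : ∑ ξ : Fin d → F, ftF χ V ξ * (aS χ E ξ) ^ m1 * (aS χ E (-ξ)) ^ m2
      = ((Fintype.card F : ℂ) ^ d)⁻¹ *
        ∑ ξ : Fin d → F, (∑ x, aind V x * χ (-(dotp ξ x))) * (aS χ E ξ) ^ m1
          * (aS χ E (-ξ)) ^ m2 := by
    rw [Finset.mul_sum]
    refine Finset.sum_congr rfl fun ξ _ => ?_
    rw [ftF_apply']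
    ring
  rw [hstep, master χ hχ (aind V) E m1 m2, count2, ← mul_assoc, inv_mul_cancel₀ hq, one_mul]

lemma aS_neg (χ : AddChar F ℂ) (E : Set (Fin d → F)) (ξ : Fin d → F) :
    aS χ E (-ξ) = (starRingEnd ℂ) (aS χ E ξ) := by
  rw [aS, aS, map_sum]
  refine Finset.sum_congr rfl fun x _ => ?_
  rw [map_mul]
  congr 1
  · rw [aind]; split_ifs <;> simp
  · rw [dotp_neg_left, AddChar.map_neg_eq_conj]

lemma abs_aS_neg (χ : AddChar F ℂ) (E : Set (Fin d → F)) (ξ : Fin d → F) :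
    ‖aS χ E (-ξ)‖ = ‖aS χ E ξ‖ := by
  rw [aS_neg, Complex.norm_conj]

lemma sum_abs_aS_pow (χ : AddChar F ℂ) (hχ : χ ≠ 1) (E : Set (Fin d → F)) (n : ℕ) :
    ∑ ξ : Fin d → F, ‖aS χ E ξ‖ ^ (2 * n)
      = (Fintype.card F : ℝ) ^ d * (energy n E : ℝ) := by
  have h2 : ∀ ξ : Fin d → F, ((‖aS χ E ξ‖ ^ (2 * n) : ℝ) : ℂ)
      = aS χ E ξ ^ n * aS χ E (-ξ) ^ n := by
    intro ξ
    rw [pow_mul, Complex.sq_norm, Complex.ofReal_pow, aS_neg, ← mul_pow, Complex.mul_conj]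
  have key : ((∑ ξ : Fin d → F, ‖aS χ E ξ‖ ^ (2 * n) : ℝ) : ℂ)
      = (Fintype.card F : ℂ) ^ d * (energy n E : ℂ) := by
    rw [Complex.ofReal_sum]
    rw [Finset.sum_congr rfl fun ξ _ => h2 ξ]
    exact count_energy χ hχ E n
  rw [show (Fintype.card F : ℂ) ^ d * (energy n E : ℂ)
      = (((Fintype.card F : ℝ) ^ d * (energy n E : ℝ) : ℝ) : ℂ) by push_cast; ring] at key
  exact_mod_cast key

end Aux2
section Aux3

variable {F : Type} [Field F] [Fintype F] {d : ℕ}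

lemma energy_le_count (E V : Set (Fin d → F)) (hEV : E ⊆ V) (n : ℕ) :
    energy (n+1) E ≤ Nat.card {p : (Fin (n+1) → Fin d → F) × (Fin n → Fin d → F) //
      (∀ i, p.1 i ∈ E) ∧ (∀ i, p.2 i ∈ E) ∧ (∑ i, p.1 i) - (∑ i, p.2 i) ∈ V} := by
  rw [energy]
  refine Nat.card_le_card_of_injective (fun p =>
    ⟨(p.1.1, fun i => p.1.2 i.castSucc), p.2.1, fun i => p.2.2.1 _, ?_⟩) ?_
  · have h := p.2.2.2
    have hsplit : (∑ i : Fin (n+1), p.1.2 i)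
        = (∑ i : Fin n, p.1.2 i.castSucc) + p.1.2 (Fin.last n) := Fin.sum_univ_castSucc _
    have hkey : (∑ i, p.1.1 i) - (∑ i : Fin n, p.1.2 i.castSucc) = p.1.2 (Fin.last n) := by
      rw [h, hsplit]; abel
    rw [hkey]
    exact hEV (p.2.2.1 (Fin.last n))
  · rintro ⟨⟨p1, p2⟩, hp⟩ ⟨⟨q1, q2⟩, hq⟩ h
    simp only [Subtype.mk.injEq, Prod.mk.injEq] at h
    obtain ⟨h1, h2⟩ := h
    have hcs : ∀ j : Fin n, p2 j.castSucc = q2 j.castSucc := fun j => congrFun h2 j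
    have hlast : p2 (Fin.last n) = q2 (Fin.last n) := by
      have e2 : (∑ i : Fin n, p2 i.castSucc) = ∑ i : Fin n, q2 i.castSucc :=
        Finset.sum_congr rfl fun i _ => hcs i
      have e1 : (∑ i : Fin n, p2 i.castSucc) + p2 (Fin.last n)
          = (∑ i : Fin n, p2 i.castSucc) + q2 (Fin.last n) := by
        conv_rhs => rw [e2]
        rw [← Fin.sum_univ_castSucc, ← Fin.sum_univ_castSucc, ← hp.2.2, ← hq.2.2, h1]
      exact add_left_cancel e1
    apply Subtype.ext
    exact Prod.ext h1 (funext fun i => Fin.lastCases hlast hcs i)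

lemma key_rec (c2 c3 : ℝ) (hc3 : 0 ≤ c3) (hd : 1 ≤ d)
    (χ : AddChar F ℂ) (hχ : χ ≠ 1) (V E : Set (Fin d → F)) (hEV : E ⊆ V)
    (hV2 : (Nat.card V : ℝ) ≤ c2 * (Fintype.card F : ℝ) ^ (d - 1))
    (hV3 : ∀ ξ : Fin d → F, ξ ≠ 0 →
      ‖ftF χ V ξ‖ ≤ c3 * (Fintype.card F : ℝ) ^ (-(((d : ℝ) + 1) / 2)))
    (n : ℕ) :
    (energy (n+1) E : ℝ) ≤
      2 * c2 * (Nat.card E : ℝ) ^ (2*n+1) / (Fintype.card F : ℝ)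
      + 2 * c3^2 * (Fintype.card F : ℝ) ^ (d-1) * (energy n E : ℝ) := by
  classical
  set q : ℝ := (Fintype.card F : ℝ) with hqdef
  have hq0 : (0:ℝ) < q := by
    have := Fintype.card_pos (α := F); positivity
  have hqd : (0:ℝ) < q ^ d := pow_pos hq0 d
  set A : (Fin d → F) → ℝ := fun ξ => ‖aS χ E ξ‖ with hA
  have hA0 : ∀ ξ, 0 ≤ A ξ := fun ξ => norm_nonneg _
  set e : ℝ := (Nat.card E : ℝ) with he
  have he0 : (0:ℝ) ≤ e := Nat.cast_nonneg _
  set Λ : ℝ := (energy (n+1) E : ℝ) with hΛdef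
  set L : ℝ := (energy n E : ℝ) with hLdef
  have hΛ0 : 0 ≤ Λ := Nat.cast_nonneg _
  have hL0 : 0 ≤ L := Nat.cast_nonneg _
  -- step 1 : Λ ≤ N
  set N := Nat.card {p : (Fin (n+1) → Fin d → F) × (Fin n → Fin d → F) //
      (∀ i, p.1 i ∈ E) ∧ (∀ i, p.2 i ∈ E) ∧ (∑ i, p.1 i) - (∑ i, p.2 i) ∈ V} with hN
  have step1 : Λ ≤ (N : ℝ) := by
    rw [hΛdef]
    exact_mod_cast energy_le_count E V hEV n
  -- step 2 : N ≤ sum of abs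
  have step2 : (N:ℝ) ≤ ∑ ξ : Fin d → F, ‖ftF χ V ξ‖ * A ξ ^ (2*n+1) := by
    have h2 : (N : ℂ) = ∑ ξ : Fin d → F, ftF χ V ξ * (aS χ E ξ) ^ (n+1) * (aS χ E (-ξ)) ^ n :=
      (ftF_master χ hχ V E (n+1) n).symm
    have : (N:ℝ) = ‖(N:ℂ)‖ := by rw [Complex.norm_natCast]
    rw [this, h2]
    refine le_trans (norm_sum_le _ _) (le_of_eq (Finset.sum_congr rfl fun ξ _ => ?_))
    rw [norm_mul, norm_mul, norm_pow, norm_pow, abs_aS_neg]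
    rw [show 2*n+1 = (n+1) + n by omega, pow_add]
    ring
  -- step 3 : split ξ = 0
  have habs0 : ‖ftF χ V 0‖ ≤ c2 / q := by
    rw [ftF_zero, norm_div, norm_pow, Complex.norm_natCast, Complex.norm_natCast]
    have hVq : (Nat.card V : ℝ) ≤ c2 * q ^ (d-1) := hV2
    have hqd' : q ^ d = q ^ (d-1) * q := by
      rw [← pow_succ, Nat.sub_add_cancel hd]
    calc (Nat.card V : ℝ) / q ^ d ≤ (c2 * q ^ (d-1)) / q ^ d := by gcongr
      _ = c2 / q := by
          rw [hqd', mul_comm c2 (q ^ (d-1)),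
            mul_div_mul_left _ _ (ne_of_gt (pow_pos hq0 (d-1)))]
  have hA00 : A 0 = e := by rw [hA, he]; simp [aS_zero, Complex.norm_natCast]
  -- step 4: tail bound
  have step4 : ∑ ξ : Fin d → F, ‖ftF χ V ξ‖ * A ξ ^ (2*n+1)
      ≤ c2 / q * e ^ (2*n+1)
        + c3 * q ^ (-(((d : ℝ) + 1) / 2)) * ∑ ξ : Fin d → F, A ξ ^ (2*n+1) := by
    rw [← Finset.add_sum_erase Finset.univ _ (Finset.mem_univ (0 : Fin d → F))]
    have t1 : ‖ftF χ V 0‖ * A 0 ^ (2*n+1) ≤ c2 / q * e ^ (2*n+1) := by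
      rw [hA00]
      exact mul_le_mul_of_nonneg_right habs0 (pow_nonneg he0 _)
    have t2 : ∑ ξ ∈ Finset.univ.erase (0 : Fin d → F),
          ‖ftF χ V ξ‖ * A ξ ^ (2*n+1)
        ≤ c3 * q ^ (-(((d : ℝ) + 1) / 2)) * ∑ ξ : Fin d → F, A ξ ^ (2*n+1) := by
      have hsub : ∑ ξ ∈ Finset.univ.erase (0 : Fin d → F),
            ‖ftF χ V ξ‖ * A ξ ^ (2*n+1)
          ≤ ∑ ξ ∈ Finset.univ.erase (0 : Fin d → F),
            c3 * q ^ (-(((d : ℝ) + 1) / 2)) * A ξ ^ (2*n+1) := by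
        refine Finset.sum_le_sum fun ξ hξ => ?_
        exact mul_le_mul_of_nonneg_right (hV3 ξ (Finset.mem_erase.1 hξ).1)
          (pow_nonneg (hA0 ξ) _)
      refine le_trans hsub ?_
      rw [← Finset.mul_sum]
      refine mul_le_mul_of_nonneg_left ?_ (by positivity)
      refine Finset.sum_le_sum_of_subset_of_nonneg (Finset.subset_univ _)
        fun ξ _ _ => pow_nonneg (hA0 ξ) _
    exact add_le_add t1 t2
  -- step 5: Cauchy-Schwarz
  have step5 : (∑ ξ : Fin d → F, A ξ ^ (2*n+1)) ^ 2 ≤ (q ^ d * L) * (q ^ d * Λ) := by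
    have hcs := Finset.sum_mul_sq_le_sq_mul_sq Finset.univ (fun ξ => A ξ ^ n)
      (fun ξ => A ξ ^ (n+1))
    have h1 : ∀ ξ : Fin d → F, A ξ ^ n * A ξ ^ (n+1) = A ξ ^ (2*n+1) := fun ξ => by
      rw [← pow_add]; congr 1; omega
    have h2 : ∀ ξ : Fin d → F, (A ξ ^ n) ^ 2 = A ξ ^ (2*n) := fun ξ => by
      rw [← pow_mul]; congr 1; omega
    have h3 : ∀ ξ : Fin d → F, (A ξ ^ (n+1)) ^ 2 = A ξ ^ (2*(n+1)) := fun ξ => by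
      rw [← pow_mul]; congr 1; omega
    simp only [h1, h2, h3] at hcs
    rwa [sum_abs_aS_pow χ hχ E n, sum_abs_aS_pow χ hχ E (n+1), ← hqdef, ← hLdef, ← hΛdef] at hcs
  have step5' : ∑ ξ : Fin d → F, A ξ ^ (2*n+1)
      ≤ q ^ d * (Real.sqrt L * Real.sqrt Λ) := by
    have hnn : 0 ≤ ∑ ξ : Fin d → F, A ξ ^ (2*n+1) :=
      Finset.sum_nonneg fun ξ _ => pow_nonneg (hA0 ξ) _
    have := Real.sqrt_le_sqrt step5
    rw [Real.sqrt_sq hnn] at this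
    refine le_trans this (le_of_eq ?_)
    rw [show (q ^ d * L) * (q ^ d * Λ) = (q^d)^2 * (L * Λ) by ring]
    rw [Real.sqrt_mul (by positivity), Real.sqrt_sq (le_of_lt hqd),
      Real.sqrt_mul hL0]
  -- step 6: exponent arithmetic
  have hexp : q ^ (-(((d : ℝ) + 1) / 2)) * q ^ d = Real.sqrt (q ^ (d-1)) := by
    have h1 : Real.sqrt (q ^ (d-1)) = q ^ ((((d:ℝ) - 1)) / 2) := by
      rw [show ((d:ℝ) - 1) = ((d - 1 : ℕ) : ℝ) by
        rw [Nat.cast_sub hd]; norm_num]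
      rw [Real.sqrt_eq_rpow, ← Real.rpow_natCast q (d-1), ← Real.rpow_mul (le_of_lt hq0)]
      congr 1
      ring
    rw [h1, ← Real.rpow_natCast q d, ← Real.rpow_add hq0]
    congr 1
    ring
  have hsq : Real.sqrt (q ^ (d-1)) ^ 2 = q ^ (d-1) := Real.sq_sqrt (by positivity)
  -- combine
  have main : Λ ≤ c2 / q * e ^ (2*n+1)
      + (c3 * Real.sqrt (q ^ (d-1))) * (Real.sqrt L * Real.sqrt Λ) := by
    have c1 : Λ ≤ c2 / q * e ^ (2*n+1)
        + c3 * q ^ (-(((d : ℝ) + 1) / 2)) * (q ^ d * (Real.sqrt L * Real.sqrt Λ)) := by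
      refine le_trans (le_trans step1 (le_trans step2 step4)) ?_
      refine add_le_add_right ?_ _
      refine mul_le_mul_of_nonneg_left step5' (by positivity)
    refine le_trans c1 (le_of_eq ?_)
    rw [show c3 * q ^ (-(((d : ℝ) + 1) / 2)) * (q ^ d * (Real.sqrt L * Real.sqrt Λ))
        = c3 * (q ^ (-(((d : ℝ) + 1) / 2)) * q ^ d) * (Real.sqrt L * Real.sqrt Λ) by ring,
      hexp]
  -- quadratic absorption
  have hb0 : 0 ≤ c3 * Real.sqrt (q ^ (d-1)) := by positivity
  have hsL := Real.sq_sqrt hL0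
  have hsΛ := Real.sq_sqrt hΛ0
  have hfin : Λ ≤ 2 * (c2 / q * e ^ (2*n+1)) + 2 * (c3 * Real.sqrt (q ^ (d-1)))^2 * L := by
    nlinarith [sq_nonneg (c3 * Real.sqrt (q ^ (d-1)) * Real.sqrt L - Real.sqrt Λ),
      Real.sqrt_nonneg L, Real.sqrt_nonneg Λ, hb0]
  refine le_trans hfin (le_of_eq ?_)
  rw [mul_pow, hsq]
  ring

end Aux3
section Aux4

variable {F : Type} [Field F] [Fintype F] {d : ℕ}

lemma unroll (c2 c3 : ℝ) (hc2 : 0 ≤ c2) (hc3 : 0 ≤ c3) (hd : 1 ≤ d)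
    (χ : AddChar F ℂ) (hχ : χ ≠ 1) (V E : Set (Fin d → F)) (hEV : E ⊆ V)
    (hV2 : (Nat.card V : ℝ) ≤ c2 * (Fintype.card F : ℝ) ^ (d - 1))
    (hV3 : ∀ ξ : Fin d → F, ξ ≠ 0 →
      ‖ftF χ V ξ‖ ≤ c3 * (Fintype.card F : ℝ) ^ (-(((d : ℝ) + 1) / 2)))
    (t : ℕ) :
    (energy (t+1) E : ℝ) ≤
      (2*c3^2)^t * (Fintype.card F : ℝ) ^ ((d-1)*t) * (energy 1 E : ℝ)
      + (∑ j ∈ Finset.range t, 2 * c2 * (2*c3^2)^j * (Fintype.card F : ℝ) ^ ((d-1)*j)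
          * (Nat.card E : ℝ) ^ (2*(t+1-j)-1)) / (Fintype.card F : ℝ) := by
  set q : ℝ := (Fintype.card F : ℝ) with hqdef
  have hq0 : (0:ℝ) < q := by
    have := Fintype.card_pos (α := F); positivity
  set e : ℝ := (Nat.card E : ℝ) with he
  have he0 : (0:ℝ) ≤ e := Nat.cast_nonneg _
  set B : ℝ := 2*c3^2 with hB
  have hB0 : (0:ℝ) ≤ B := by positivity
  induction t with
  | zero => simp
  | succ t ih =>
    have hkey := key_rec c2 c3 hc3 hd χ hχ V E hEV hV2 hV3 (t+1)
    have hΛ1 : (0:ℝ) ≤ (energy 1 E : ℝ) := Nat.cast_nonneg _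
    have step : (energy (t+2) E : ℝ)
        ≤ 2 * c2 * e ^ (2*(t+1)+1) / q
          + B * q ^ (d-1) *
            ((B^t * q ^ ((d-1)*t) * (energy 1 E : ℝ))
              + (∑ j ∈ Finset.range t, 2 * c2 * B^j * q ^ ((d-1)*j)
                  * e ^ (2*(t+1-j)-1)) / q) := by
      refine le_trans hkey ?_
      have hmul : B * q ^ (d-1) * (energy (t+1) E : ℝ)
          ≤ B * q ^ (d-1) *
            ((B^t * q ^ ((d-1)*t) * (energy 1 E : ℝ))
              + (∑ j ∈ Finset.range t, 2 * c2 * B^j * q ^ ((d-1)*j)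
                  * e ^ (2*(t+1-j)-1)) / q) :=
        mul_le_mul_of_nonneg_left ih (by positivity)
      exact add_le_add_right hmul _
    refine le_trans step (le_of_eq ?_)
    rw [Finset.sum_range_succ']
    have hterm : ∀ j, 2 * c2 * B^(j+1) * q ^ ((d-1)*(j+1)) * e ^ (2*(t+1+1-(j+1))-1)
        = B * q ^ (d-1) * (2 * c2 * B^j * q ^ ((d-1)*j) * e ^ (2*(t+1-j)-1)) := by
      intro j
      rw [show (d-1)*(j+1) = (d-1)*j + (d-1) by ring]
      rw [show 2*(t+1+1-(j+1))-1 = 2*(t+1-j)-1 by omega]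
      rw [pow_succ, pow_add]
      ring
    rw [Finset.sum_congr rfl fun j _ => hterm j, ← Finset.mul_sum]
    rw [show (d-1)*(t+1) = (d-1)*t + (d-1) by ring]
    rw [pow_succ, pow_add]
    have : (2:ℕ)*(t+1+1-0)-1 = 2*(t+1)+1 := by omega
    rw [this]
    field_simp
    ring

end Aux4

/-- for `d ≥ 2`, even `k ≥ 4` and `c₁, c₂, c₃ > 0` there is `C > 0` such that
for every odd prime power `q`, every `(c₁,c₂,c₃)`-regular `V ⊆ 𝔽_q^d` and every `E ⊆ V`,
`Λ_k(E) ≤ C (q^{(d-1)(k-2)/2} Λ_2(E) + q^{-1} Σ_{j=0}^{(k-4)/2} q^{(d-1)j} |E|^{k-1-2j})`. -/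
theorem stmt_11 (d k : ℕ) (hd : 2 ≤ d) (hk : 4 ≤ k) (hke : Even k)
    (c1 c2 c3 : ℝ) (hc1 : 0 < c1) (hc2 : 0 < c2) (hc3 : 0 < c3) :
    ∃ C : ℝ, 0 < C ∧
      ∀ (F : Type) [Field F] [Fintype F], Odd (Fintype.card F) →
        ∀ χ : AddChar F ℂ, χ ≠ 1 →
          ∀ V : Set (Fin d → F), IsRegularVariety c1 c2 c3 χ V →
            ∀ E : Set (Fin d → F), E ⊆ V →
              (energy (k / 2) E : ℝ) ≤
                C * ((Fintype.card F : ℝ) ^ ((d - 1) * (k - 2) / 2) * (energy 1 E : ℝ) +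
                  (∑ j ∈ Finset.range ((k - 4) / 2 + 1),
                    (Fintype.card F : ℝ) ^ ((d - 1) * j) *
                      (Nat.card E : ℝ) ^ (k - 1 - 2 * j)) / (Fintype.card F : ℝ)) := by
  set base : ℝ := 1 + 2*c2 + 2*c3^2 with hbase
  have hbase1 : (1:ℝ) ≤ base := by nlinarith
  refine ⟨base ^ k, by positivity, ?_⟩
  intro F _ _ _hodd χ hχ V hV E hEV
  obtain ⟨r, hr⟩ := hke
  have hr2 : 2 ≤ r := by omega
  set t : ℕ := r - 1 with ht
  have htr : r = t + 1 := by omega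
  have ht1 : 1 ≤ t := by omega
  set q : ℝ := (Fintype.card F : ℝ) with hqdef
  have hq0 : (0:ℝ) < q := by
    have := Fintype.card_pos (α := F); positivity
  set e : ℝ := (Nat.card E : ℝ) with he
  have he0 : (0:ℝ) ≤ e := Nat.cast_nonneg _
  set B : ℝ := 2*c3^2 with hB
  have hB0 : (0:ℝ) ≤ B := by positivity
  have hΛ1 : (0:ℝ) ≤ (energy 1 E : ℝ) := Nat.cast_nonneg _
  have hmain := unroll c2 c3 (le_of_lt hc2) (le_of_lt hc3) (by omega) χ hχ V E hEV
    hV.2.1 (fun ξ hξ => hV.2.2 ξ hξ) t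
  rw [show k / 2 = t + 1 by omega]
  -- coefficient bounds
  have hBbase : B ≤ base := by nlinarith
  have hcoef1 : B ^ t ≤ base ^ k := by
    calc B ^ t ≤ base ^ t := pow_le_pow_left₀ hB0 hBbase t
      _ ≤ base ^ k := pow_le_pow_right₀ hbase1 (by omega)
  have hcoef2 : ∀ j, j < t → 2 * c2 * B ^ j ≤ base ^ k := by
    intro j hj
    calc 2 * c2 * B ^ j ≤ base * base ^ j := by
          refine mul_le_mul (by nlinarith) (pow_le_pow_left₀ hB0 hBbase j) (by positivity)
            (by positivity)
      _ = base ^ (j+1) := (pow_succ' base j).symm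
      _ ≤ base ^ k := pow_le_pow_right₀ hbase1 (by omega)
  -- compare term by term
  have hidx : (d - 1) * (k - 2) / 2 = (d-1) * t := by
    have h1 : k - 2 = 2 * t := by omega
    rw [h1, show (d-1) * (2*t) = ((d-1)*t)*2 by ring, Nat.mul_div_cancel _ (by norm_num)]
  have hrange : (k - 4) / 2 + 1 = t := by omega
  have hfirst : B ^ t * q ^ ((d-1)*t) * (energy 1 E : ℝ)
      ≤ base ^ k * (q ^ ((d - 1) * (k - 2) / 2) * (energy 1 E : ℝ)) := by
    rw [hidx, ← mul_assoc]
    refine mul_le_mul_of_nonneg_right ?_ hΛ1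
    exact mul_le_mul_of_nonneg_right hcoef1 (by positivity)
  have hS : (∑ j ∈ Finset.range t, 2 * c2 * B^j * q ^ ((d-1)*j) * e ^ (2*(t+1-j)-1))
      ≤ base ^ k * ∑ j ∈ Finset.range t, q ^ ((d - 1) * j) * e ^ (k - 1 - 2 * j) := by
    rw [Finset.mul_sum]
    refine Finset.sum_le_sum fun j hj => ?_
    have hjt : j < t := Finset.mem_range.1 hj
    have hexp : 2*(t+1-j)-1 = k - 1 - 2*j := by omega
    calc 2 * c2 * B^j * q ^ ((d-1)*j) * e ^ (2*(t+1-j)-1)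
        = (2 * c2 * B^j) * (q ^ ((d-1)*j) * e ^ (k-1-2*j)) := by rw [hexp]; ring
      _ ≤ base ^ k * (q ^ ((d-1)*j) * e ^ (k-1-2*j)) :=
          mul_le_mul_of_nonneg_right (hcoef2 j hjt) (by positivity)
  have hsum : (∑ j ∈ Finset.range t, 2 * c2 * B^j * q ^ ((d-1)*j) * e ^ (2*(t+1-j)-1)) / q
      ≤ base ^ k * ((∑ j ∈ Finset.range ((k - 4) / 2 + 1),
          q ^ ((d - 1) * j) * e ^ (k - 1 - 2 * j)) / q) := by
    rw [hrange, mul_div_assoc']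
    exact (div_le_div_iff_of_pos_right hq0).2 hS
  refine le_trans hmain ?_
  refine le_trans (add_le_add hfirst hsum) (le_of_eq ?_)
  ring
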